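/- With $x(z) = z+1/z$ and $\xi^\alpha_k$ defined recursively by $\xi^\alpha_{-1}(z) = z^{-\alpha}dz$, $\xi^\alpha_k = -d(\xi^\alpha_{k-1}/dx)$, each $\xi^\alpha_k$ for $k \ge 0$ is odd under the involution $z \mapsto 1/z$: $\xi^\alpha_k(1/z) = -\xi^\alpha_k(z)$ (as pullback of 1-forms). -/

import Mathlib

/-- The coefficient (w.r.t. `dz`) of the 1-form `ξ^α_{k-1}`: `xi α 0` is the coefficient of
`ξ^α_{-1}(z) = z^{-α} dz`, and `xi α (k+1)` is the coefficient of
`ξ^α_k = -d(ξ^α_{k-1}/dx)` where `x(z) = z + 1/z`. -/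
noncomputable def xi (α : ℕ) : ℕ → ℂ → ℂ
  | 0 => fun z => z ^ (-(α : ℤ))
  | (k + 1) => fun z => - deriv (fun w => xi α k w / (1 - 1 / w ^ 2)) z

/-- The 0-form `ξ^α_{k-1}/dx`. -/
noncomputable def Fxi (α k : ℕ) : ℂ → ℂ := fun z => xi α k z / (1 - 1 / z ^ 2)

lemma xi_succ (α k : ℕ) (z : ℂ) : xi α (k + 1) z = - deriv (Fxi α k) z := rfl

lemma sq_ne_one (z : ℂ) (h1 : z ≠ 1) (h2 : z ≠ -1) : z ^ 2 ≠ 1 := by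
  intro h
  have hf : (z - 1) * (z + 1) = 0 := by linear_combination h
  rcases mul_eq_zero.mp hf with h' | h'
  · exact h1 (by linear_combination h')
  · exact h2 (by linear_combination h')

lemma denom_ne (z : ℂ) (h0 : z ≠ 0) (h1 : z ≠ 1) (h2 : z ≠ -1) :
    (1 : ℂ) - 1 / z ^ 2 ≠ 0 := by
  have : (1 : ℂ) - 1 / z ^ 2 = (z ^ 2 - 1) / z ^ 2 := by field_simp
  rw [this]
  exact div_ne_zero (sub_ne_zero.mpr (sq_ne_one z h1 h2)) (pow_ne_zero 2 h0)

lemma xi_analytic (α k : ℕ) (z : ℂ) (h0 : z ≠ 0) (h1 : z ≠ 1) (h2 : z ≠ -1) :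
    AnalyticAt ℂ (xi α k) z := by
  induction k generalizing z with
  | zero =>
    have : AnalyticAt ℂ (fun w : ℂ => w ^ (-(α : ℤ))) z := by
      have h : AnalyticAt ℂ (fun w : ℂ => (w ^ α)⁻¹) z :=
        ((analyticAt_id (𝕜 := ℂ) (z := z)).pow α).inv (pow_ne_zero α h0)
      simpa using h
    simpa [xi] using this
  | succ k ih =>
    have hF : ∀ w : ℂ, w ≠ 0 → w ≠ 1 → w ≠ -1 → AnalyticAt ℂ (Fxi α k) w := by
      intro w w0 w1 w2
      exact (ih w w0 w1 w2).div (analyticAt_const.sub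
        (analyticAt_const.div ((analyticAt_id (𝕜 := ℂ)).pow 2) (pow_ne_zero 2 w0)))
        (denom_ne w w0 w1 w2)
    have hD : AnalyticAt ℂ (deriv (Fxi α k)) z := by
      have hOn : AnalyticOnNhd ℂ (Fxi α k) {z} := by
        intro w hw
        rw [Set.mem_singleton_iff] at hw
        rw [hw]
        exact hF z h0 h1 h2
      exact hOn.deriv z rfl
    exact hD.neg

lemma Fxi_analytic (α k : ℕ) (z : ℂ) (h0 : z ≠ 0) (h1 : z ≠ 1) (h2 : z ≠ -1) :
    AnalyticAt ℂ (Fxi α k) z :=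
  (xi_analytic α k z h0 h1 h2).div (analyticAt_const.sub
    (analyticAt_const.div ((analyticAt_id (𝕜 := ℂ)).pow 2) (pow_ne_zero 2 h0)))
    (denom_ne z h0 h1 h2)

lemma inv_ne (z : ℂ) (h0 : z ≠ 0) (h1 : z ≠ 1) (h2 : z ≠ -1) :
    (1 / z ≠ 0) ∧ (1 / z ≠ 1) ∧ (1 / z ≠ -1) := by
  refine ⟨one_div_ne_zero h0, ?_, ?_⟩
  · intro h
    rw [div_eq_iff h0, one_mul] at h
    exact h1 h.symm
  · intro h
    rw [div_eq_iff h0] at h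
    exact h2 (by linear_combination h)

/-- From the symmetry `Fxi α k (1/w) = c - Fxi α k w` near `z`, deduce oddness of the
derivative coefficient. -/
lemma odd_of_sym (α k : ℕ) (c : ℂ)
    (hsym : ∀ w : ℂ, w ≠ 0 → w ≠ 1 → w ≠ -1 → Fxi α k (1 / w) = c - Fxi α k w)
    (z : ℂ) (h0 : z ≠ 0) (h1 : z ≠ 1) (h2 : z ≠ -1) :
    xi α (k + 1) (1 / z) * (-(1 / z ^ 2)) = - xi α (k + 1) z := by
  obtain ⟨i0, i1, i2⟩ := inv_ne z h0 h1 h2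
  have heq : (fun w : ℂ => Fxi α k (1 / w)) =ᶠ[nhds z] (fun w => c - Fxi α k w) := by
    filter_upwards [eventually_ne_nhds h0, eventually_ne_nhds h1, eventually_ne_nhds h2]
      with w w0 w1 w2
    exact hsym w w0 w1 w2
  have hder : deriv (fun w : ℂ => Fxi α k (1 / w)) z = deriv (fun w => c - Fxi α k w) z :=
    heq.deriv_eq
  have hFd : HasDerivAt (Fxi α k) (deriv (Fxi α k) z⁻¹) z⁻¹ := by
    have := (Fxi_analytic α k (1 / z) i0 i1 i2).differentiableAt
    rw [one_div] at this
    exact this.hasDerivAt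
  have hcomp : HasDerivAt (fun w : ℂ => Fxi α k (1 / w))
      (deriv (Fxi α k) z⁻¹ * (-(z ^ 2)⁻¹)) z := by
    have := HasDerivAt.comp z hFd (hasDerivAt_inv h0)
    simpa [Function.comp_def, one_div] using this
  have key : deriv (Fxi α k) z⁻¹ * (-(z ^ 2)⁻¹) = - deriv (Fxi α k) z := by
    rw [← hcomp.deriv, hder, deriv_const_sub]
  rw [xi_succ, xi_succ, one_div]
  calc -deriv (Fxi α k) z⁻¹ * (-(1 / z ^ 2))
      = -(deriv (Fxi α k) z⁻¹ * (-(z ^ 2)⁻¹)) := by rw [one_div]; ring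
    _ = -(-deriv (Fxi α k) z) := by rw [key]

lemma xi_zero (α : ℕ) (z : ℂ) : xi α 0 z = z ^ (-(α : ℤ)) := rfl

theorem odd_all (α : ℕ) (hα : α ≤ 1) (k : ℕ) :
    ∀ z : ℂ, z ≠ 0 → z ≠ 1 → z ≠ -1 →
      xi α (k + 1) (1 / z) * (-(1 / z ^ 2)) = - xi α (k + 1) z := by
  induction k with
  | zero =>
    intro z h0 h1 h2
    refine odd_of_sym α 0 (1 - α) (fun w w0 w1 w2 => ?_) z h0 h1 h2
    have hden : (1 : ℂ) - w ^ 2 ≠ 0 := fun h => (sq_ne_one w w1 w2) (by linear_combination -h)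
    have hden2 : (w : ℂ) ^ 2 - 1 ≠ 0 := sub_ne_zero.mpr (sq_ne_one w w1 w2)
    have hden3 : (-1 : ℂ) + w ^ 2 ≠ 0 := fun h => hden2 (by linear_combination h)
    interval_cases α <;>
      · simp only [Fxi, xi_zero]
        push_cast [neg_zero, zpow_zero]
        field_simp [hden2, hden3] <;> ring
  | succ k ih =>
    intro z h0 h1 h2
    refine odd_of_sym α (k + 1) 0 (fun w w0 w1 w2 => ?_) z h0 h1 h2
    have hodd := ih w w0 w1 w2
    have hxi : xi α (k + 1) (1 / w) = w ^ 2 * xi α (k + 1) w := by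
      have hw2 : (w : ℂ) ^ 2 ≠ 0 := pow_ne_zero 2 w0
      field_simp at hodd
      linear_combination -hodd
    have hden2 : (w : ℂ) ^ 2 - 1 ≠ 0 := sub_ne_zero.mpr (sq_ne_one w w1 w2)
    have hden3 : (-1 : ℂ) + w ^ 2 ≠ 0 := fun h => hden2 (by linear_combination h)
    have hden : (1 : ℂ) - w ^ 2 ≠ 0 := fun h => hden2 (by linear_combination -h)
    simp only [Fxi]
    rw [hxi]
    field_simp [hden, hden2, hden3] <;> ring

/-- For `k ≥ 0`, `ξ^α_k` is odd under `z ↦ 1/z`: the pullback of `ξ^α_k` under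
`σ(z) = 1/z`, whose coefficient is `xi α (k+1) (1/z) · (-1/z^2)`, equals `-ξ^α_k`. -/
theorem stmt9 (α : ℕ) (hα : α ≤ 1) (k : ℕ) (z : ℂ)
    (h0 : z ≠ 0) (h1 : z ≠ 1) (h2 : z ≠ -1) :
    xi α (k + 1) (1 / z) * (-(1 / z ^ 2)) = - xi α (k + 1) z := by
  exact odd_all α hα k z h0 h1 h2
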